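/- The polynomial g = X³ - 29X² + 4X - 1 is irreducible over ℚ and has a non-real complex root; moreover, in the ring of integers 𝒪_K of its root field K = ℚ[X]/(g) there exist two distinct maximal ideals P₁ ≠ P₂ such that the ideal generated by 5 factors as 5·𝒪_K = P₁²·P₂. -/

import Mathlib

open Polynomial NumberField

noncomputable def g : Polynomial ℚ := X ^ 3 - 29 * X ^ 2 + 4 * X - 1



lemma g_natDegree : g.natDegree = 3 := by unfold g; compute_degree!

lemma g_monic : g.Monic := by unfold g; monicity!

lemma g_irred : Irreducible g := by
  rw [Polynomial.irreducible_iff_roots_eq_zero_of_degree_le_three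
    (by rw [g_natDegree]; norm_num) (by rw [g_natDegree])]
  rw [Multiset.eq_zero_iff_forall_notMem]
  intro q hq
  rw [mem_roots (g_monic.ne_zero)] at hq
  have hq' : eval q g = 0 := hq
  simp only [g, eval_sub, eval_add, eval_mul, eval_pow, eval_X, eval_ofNat, eval_one] at hq'
  have hint : IsIntegral ℤ q := by
    refine ⟨(X : ℤ[X]) ^ 3 - 29 * X ^ 2 + 4 * X - 1, by monicity!, ?_⟩
    have : Polynomial.aeval q ((X : ℤ[X]) ^ 3 - 29 * X ^ 2 + 4 * X - 1) = q ^ 3 - 29 * q ^ 2 + 4 * q - 1 := by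
      simp only [map_sub, map_add, map_mul, map_pow, aeval_X, map_ofNat, map_one]
    rw [show eval₂ (algebraMap ℤ ℚ) q ((X : ℤ[X]) ^ 3 - 29 * X ^ 2 + 4 * X - 1)
      = Polynomial.aeval q ((X : ℤ[X]) ^ 3 - 29 * X ^ 2 + 4 * X - 1) from rfl, this]
    norm_num at hq' ⊢
    linarith [hq']
  obtain ⟨n, hn⟩ := IsIntegrallyClosed.isIntegral_iff.mp hint
  rw [← hn] at hq'
  have h2 : (n:ℚ)^3 - 29*(n:ℚ)^2 + 4*(n:ℚ) - 1 = 0 := by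
    norm_num at hq' ⊢; push_cast at hq' ⊢; linarith [hq']
  have h3 : n^3 - 29*n^2 + 4*n - 1 = 0 := by exact_mod_cast h2
  have hdvd : n ∣ 1 := ⟨n^2 - 29*n + 4, by linarith [h3]⟩
  rcases Int.isUnit_iff.mp (isUnit_of_dvd_one hdvd) with h | h <;> rw [h] at h3 <;> omega



lemma real_root_ge (x : ℝ) (hx : x^3 - 29*x^2 + 4*x - 1 = 0) : 28 ≤ x := by
  by_contra h
  push_neg at h
  nlinarith [sq_nonneg x, sq_nonneg (5*x - 2), sq_nonneg (x - 2), mul_nonneg (sq_nonneg x) (le_of_lt (sub_pos.mpr h)), sq_nonneg (x*(x-28))]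

lemma g_nonreal_root : ∃ z : ℂ, Polynomial.aeval z g = 0 ∧ z.im ≠ 0 := by
  by_contra h
  push_neg at h
  set gc : ℂ[X] := g.map (algebraMap ℚ ℂ) with hgc
  have hmon : gc.Monic := g_monic.map _
  have hdeg : gc.natDegree = 3 := by
    rw [hgc, natDegree_map, g_natDegree]
  have hsplit : gc.Splits := IsAlgClosed.splits gc
  have hcard : gc.roots.card = 3 := by
    rw [← hdeg]
    exact (splits_iff_card_roots.mp hsplit)
  have hsum : gc.roots.sum = 29 := by
    have heq := hsplit.nextCoeff_eq_neg_sum_roots_of_monic hmon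
    have : gc.roots.sum = -gc.nextCoeff := by rw [heq]; ring
    rw [this]
    have : gc.nextCoeff = gc.coeff 2 := by
      rw [nextCoeff_of_natDegree_pos (by rw [hdeg]; norm_num), hdeg]
    rw [this, hgc]
    rw [coeff_map]
    have : g.coeff 2 = -29 := by
      simp [g, coeff_X_pow, coeff_one, coeff_X]
    rw [this]
    norm_num
  -- each root is real and ≥ 28
  have hroots : ∀ z ∈ gc.roots, (28:ℝ) ≤ z.re ∧ z.im = 0 := by
    intro z hz
    have hz0 : Polynomial.aeval z g = 0 := by
      rw [aeval_def, ← eval_map]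
      exact (mem_roots hmon.ne_zero).mp hz
    have him : z.im = 0 := h z hz0
    refine ⟨?_, him⟩
    have hzre : z = (z.re : ℂ) := by
      exact Complex.ext rfl (by simp [him])
    have : (z.re:ℂ)^3 - 29*(z.re:ℂ)^2 + 4*(z.re:ℂ) - 1 = 0 := by
      rw [← hzre]
      simpa [g, map_ofNat] using hz0
    have hre : z.re^3 - 29*z.re^2 + 4*z.re - 1 = 0 := by
      exact_mod_cast this
    exact real_root_ge _ hre
  -- sum of real parts
  have hsum_re : ((gc.roots).map Complex.re).sum = 29 := by
    have : ((gc.roots).map Complex.re).sum = (gc.roots.sum).re := by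
      induction gc.roots using Multiset.induction with
      | empty => simp
      | cons a s ih => simp [ih]
    rw [this, hsum]; simp
  have hge : (84:ℝ) ≤ ((gc.roots).map Complex.re).sum := by
    have hcard' : ((gc.roots).map Complex.re).card = 3 := by simp [hcard]
    have := Multiset.card_nsmul_le_sum (s := (gc.roots).map Complex.re) (a := (28:ℝ)) ?_
    · rw [hcard'] at this
      norm_num at this
      linarith [this]
    · intro x hx
      obtain ⟨z, hz, rfl⟩ := Multiset.mem_map.mp hx
      exact (hroots z hz).1
  rw [hsum_re] at hge
  norm_num at hge


section
variable {K : Type} [Field K] [Algebra ℚ K]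

lemma norm_eq (hrank : Module.finrank ℚ K = 3)
    (x : K) (hx : IsIntegral ℚ x) (htop : Algebra.adjoin ℚ ({x} : Set K) = ⊤)
    (p : ℚ[X]) (hp : p.Monic) (hpdeg : p.natDegree = 3) (hpx : Polynomial.aeval x p = 0) :
    Algebra.norm ℚ x = -(p.coeff 0) := by
  let e : Algebra.adjoin ℚ ({x} : Set K) ≃ₐ[ℚ] K :=
    (Subalgebra.equivOfEq _ _ htop).trans Subalgebra.topEquiv
  let pb := (Algebra.adjoin.powerBasis hx).map e
  have hgen : pb.gen = x := rfl
  have hdim : pb.dim = (minpoly ℚ x).natDegree := rfl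
  have hdim3 : pb.dim = 3 := by rw [← pb.finrank, hrank]
  have hmdeg : (minpoly ℚ x).natDegree = 3 := by rw [← hdim, hdim3]
  have hmp : minpoly ℚ x = p := by
    have hdvd := minpoly.dvd ℚ x hpx
    obtain ⟨c, hc⟩ := hdvd
    have hpne : p ≠ 0 := hp.ne_zero
    have hcne : c ≠ 0 := by rintro rfl; rw [mul_zero] at hc; exact hpne hc
    have hmne : minpoly ℚ x ≠ 0 := minpoly.ne_zero hx
    have hdeg : p.natDegree = (minpoly ℚ x).natDegree + c.natDegree := by
      rw [hc, natDegree_mul hmne hcne]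
    rw [hpdeg, hmdeg] at hdeg
    have hc0 : c.natDegree = 0 := by omega
    have hcC : c = C (c.coeff 0) := eq_C_of_natDegree_eq_zero hc0
    have hlead : p.leadingCoeff = (minpoly ℚ x).leadingCoeff * c.leadingCoeff := by
      rw [hc, leadingCoeff_mul]
    rw [hp.leadingCoeff, (minpoly.monic hx).leadingCoeff, one_mul] at hlead
    have : c = 1 := by
      rw [leadingCoeff, hc0] at hlead
      rw [hcC, ← hlead, map_one]
    rw [this, mul_one] at hc
    exact hc.symm
  rw [← hgen, Algebra.PowerBasis.norm_gen_eq_coeff_zero_minpoly, hgen, hmp, hdim3]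
  ring
end


lemma part3' (K : Type) [Field K] [CharZero K] (θ : K) (hroot : Polynomial.aeval θ g = 0)
    (hgen : Algebra.adjoin ℚ ({θ} : Set K) = ⊤) :
    ∃ P₁ P₂ : Ideal (𝓞 K), P₁.IsMaximal ∧ P₂.IsMaximal ∧ P₁ ≠ P₂ ∧
      Ideal.span {(5 : 𝓞 K)} = P₁ ^ 2 * P₂ := by
  have hθ3 : θ^3 - 29*θ^2 + 4*θ - 1 = 0 := by
    have := hroot
    simp only [g, map_sub, map_add, map_mul, map_pow, aeval_X, map_ofNat, map_one] at this
    exact this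
  have hint : IsIntegral ℚ θ := ⟨g, g_monic, hroot⟩
  have hintZ : IsIntegral ℤ θ := by
    refine ⟨(X : ℤ[X]) ^ 3 - 29 * X ^ 2 + 4 * X - 1, by monicity!, ?_⟩
    have : Polynomial.aeval θ ((X : ℤ[X]) ^ 3 - 29 * X ^ 2 + 4 * X - 1)
        = θ ^ 3 - 29 * θ ^ 2 + 4 * θ - 1 := by
      simp only [map_sub, map_add, map_mul, map_pow, aeval_X, map_ofNat, map_one]
    rw [show eval₂ (algebraMap ℤ K) θ ((X : ℤ[X]) ^ 3 - 29 * X ^ 2 + 4 * X - 1)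
      = Polynomial.aeval θ ((X : ℤ[X]) ^ 3 - 29 * X ^ 2 + 4 * X - 1) from rfl, this, hθ3]
  have hminp : minpoly ℚ θ = g := (minpoly.eq_of_irreducible_of_monic g_irred hroot g_monic).symm
  let e : Algebra.adjoin ℚ ({θ} : Set K) ≃ₐ[ℚ] K :=
    (Subalgebra.equivOfEq _ _ hgen).trans Subalgebra.topEquiv
  let pb := (Algebra.adjoin.powerBasis hint).map e
  haveI hfd : FiniteDimensional ℚ K := Module.Finite.of_basis pb.basis
  have hrank : Module.finrank ℚ K = 3 := by
    rw [pb.finrank]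
    show (minpoly ℚ θ).natDegree = 3
    rw [hminp, g_natDegree]
  haveI : NumberField K := ⟨⟩
  have adjtop : ∀ c : ℚ, Algebra.adjoin ℚ ({θ + algebraMap ℚ K c} : Set K) = ⊤ := by
    intro c
    rw [eq_top_iff, ← hgen, Algebra.adjoin_le_iff, Set.singleton_subset_iff]
    have h1 : θ + algebraMap ℚ K c ∈ Algebra.adjoin ℚ ({θ + algebraMap ℚ K c} : Set K) :=
      Algebra.subset_adjoin (Set.mem_singleton _)
    have h2 : algebraMap ℚ K c ∈ Algebra.adjoin ℚ ({θ + algebraMap ℚ K c} : Set K) :=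
      Subalgebra.algebraMap_mem _ _
    simpa using Subalgebra.sub_mem _ h1 h2
  have hNm : Algebra.norm ℚ (θ - 1) = 25 := by
    have h := norm_eq hrank (θ - 1) (IsIntegral.sub hint isIntegral_one)
      (by have := adjtop (-1); rw [map_neg, map_one, ← sub_eq_add_neg] at this; exact this)
      (X^3 - 26*X^2 - 51*X - 25) (by monicity!) (by compute_degree!)
      (by simp only [map_sub, map_add, map_mul, map_pow, aeval_X, map_ofNat, map_one]
          linear_combination hθ3)
    rw [h]
    simp [coeff_X_pow, coeff_one, coeff_X]
  have hNp : Algebra.norm ℚ (θ + 1) = 35 := by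
    have h := norm_eq hrank (θ + 1) (IsIntegral.add hint isIntegral_one)
      (by have := adjtop 1; rw [map_one] at this; exact this)
      (X^3 - 32*X^2 + 65*X - 35) (by monicity!) (by compute_degree!)
      (by simp only [map_sub, map_add, map_mul, map_pow, aeval_X, map_ofNat, map_one]
          linear_combination hθ3)
    rw [h]
    simp [coeff_X_pow, coeff_one, coeff_X]
  have N5 : Algebra.norm ℚ (5:K) = 125 := by
    rw [show (5:K) = algebraMap ℚ K 5 by rw [map_ofNat]]
    rw [Algebra.norm_algebraMap, hrank]
    norm_num
  -- the algebraic integer θ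
  set θ' : 𝓞 K := ⟨θ, hintZ⟩ with hθ'def
  have hcoe : (algebraMap (𝓞 K) K) θ' = θ := rfl
  have hθ'3 : θ'^3 - 29*θ'^2 + 4*θ' - 1 = 0 := by
    apply NumberField.RingOfIntegers.coe_injective
    have h0 : algebraMap (𝓞 K) K (θ'^3 - 29*θ'^2 + 4*θ' - 1) = θ^3 - 29*θ^2 + 4*θ - 1 := by
      simp only [map_sub, map_add, map_mul, map_pow, map_ofNat, map_one, hcoe]
    rw [h0, map_zero, hθ3]
  -- the ideals
  set P₁ : Ideal (𝓞 K) := Ideal.span {(5 : 𝓞 K), θ' + 1} with hP₁def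
  set P₂ : Ideal (𝓞 K) := Ideal.span {(5 : 𝓞 K), θ' - 1} with hP₂def
  have h5P₁ : (5 : 𝓞 K) ∈ P₁ := Ideal.subset_span (by simp)
  have hupP₁ : θ' + 1 ∈ P₁ := Ideal.subset_span (by simp)
  have h5P₂ : (5 : 𝓞 K) ∈ P₂ := Ideal.subset_span (by simp)
  have hdnP₂ : θ' - 1 ∈ P₂ := Ideal.subset_span (by simp)
  -- the factorization
  have hfact : Ideal.span {(5 : 𝓞 K)} = P₁ ^ 2 * P₂ := by
    apply le_antisymm
    · rw [Ideal.span_singleton_le_iff_mem, pow_two]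
      have e1 : (125 : 𝓞 K) ∈ P₁ * P₁ * P₂ := by
        rw [show (125 : 𝓞 K) = 5*5*5 by norm_num]
        exact Ideal.mul_mem_mul (Ideal.mul_mem_mul h5P₁ h5P₁) h5P₂
      have e2 : 5*(θ'+1)^2 ∈ P₁ * P₁ * P₂ := by
        rw [show (5:𝓞 K)*(θ'+1)^2 = (θ'+1)*(θ'+1)*5 by ring]
        exact Ideal.mul_mem_mul (Ideal.mul_mem_mul hupP₁ hupP₁) h5P₂
      have e3 : 5*((θ'+1)*(θ'-1)) ∈ P₁ * P₁ * P₂ := by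
        rw [show (5:𝓞 K)*((θ'+1)*(θ'-1)) = 5*(θ'+1)*(θ'-1) by ring]
        exact Ideal.mul_mem_mul (Ideal.mul_mem_mul h5P₁ hupP₁) hdnP₂
      have e4 : (θ'+1)^2*(θ'-1) ∈ P₁ * P₁ * P₂ := by
        rw [show (θ'+1)^2*(θ'-1) = (θ'+1)*(θ'+1)*(θ'-1) by ring]
        exact Ideal.mul_mem_mul (Ideal.mul_mem_mul hupP₁ hupP₁) hdnP₂
      have hcomb : (5 : 𝓞 K) = 2*125 - 21*(5*(θ'+1)^2) + 21*(5*((θ'+1)*(θ'-1)))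
          + (7*(θ'^2 - 29*θ' + 4))*((θ'+1)^2*(θ'-1)) := by
        linear_combination (-7*θ'^2 - 7*θ' + 7) * hθ'3
      rw [hcomb]
      refine Ideal.add_mem _ (Ideal.add_mem _ (Ideal.sub_mem _ ?_ ?_) ?_) ?_
      · exact Ideal.mul_mem_left _ _ e1
      · exact Ideal.mul_mem_left _ _ e2
      · exact Ideal.mul_mem_left _ _ e3
      · exact Ideal.mul_mem_left _ _ e4
    · rw [pow_two]
      refine Submodule.mul_le.mpr (fun m hm n hn => ?_)
      refine Submodule.mul_induction_on hm (fun x hx y hy => ?_) (fun p q hp hq => ?_)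
      · obtain ⟨a, b, hab⟩ := Ideal.mem_span_pair.mp hx
        obtain ⟨c, d, hcd⟩ := Ideal.mem_span_pair.mp hy
        obtain ⟨f1, f2, hef⟩ := Ideal.mem_span_pair.mp hn
        rw [Ideal.mem_span_singleton]
        refine ⟨a*(y*n) + b*c*((θ'+1)*n) + b*d*f1*(θ'+1)^2 + b*d*f2*(6*θ'^2-θ'), ?_⟩
        rw [← hab, ← hcd, ← hef]
        linear_combination (b*d*f2) * hθ'3
      · rw [add_mul]
        exact Ideal.add_mem _ hp hq
  -- norms of ideals
  have habs5 : Ideal.absNorm (Ideal.span {(5 : 𝓞 K)}) = 125 := by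
    rw [Ideal.absNorm_span_singleton]
    have h1 : (Algebra.norm ℤ (5 : 𝓞 K) : ℚ) = 125 := by
      rw [Algebra.coe_norm_int, show ((5 : 𝓞 K) : K) = (5:K) from map_ofNat (algebraMap (𝓞 K) K) 5, N5]
    have h125 : Algebra.norm ℤ (5 : 𝓞 K) = 125 := by exact_mod_cast h1
    rw [h125]
    rfl
  have habsup : Ideal.absNorm (Ideal.span {θ' + 1}) = 35 := by
    rw [Ideal.absNorm_span_singleton]
    have h1 : (Algebra.norm ℤ (θ' + 1) : ℚ) = 35 := by
      rw [Algebra.coe_norm_int, show ((θ' + 1 : 𝓞 K) : K) = θ + 1 by rw [RingOfIntegers.coe_eq_algebraMap, map_add, map_one, hcoe], hNp]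
    have h35 : Algebra.norm ℤ (θ' + 1) = 35 := by exact_mod_cast h1
    rw [h35]
    rfl
  have habsdn : Ideal.absNorm (Ideal.span {θ' - 1}) = 25 := by
    rw [Ideal.absNorm_span_singleton]
    have h1 : (Algebra.norm ℤ (θ' - 1) : ℚ) = 25 := by
      rw [Algebra.coe_norm_int, show ((θ' - 1 : 𝓞 K) : K) = θ - 1 by rw [RingOfIntegers.coe_eq_algebraMap, map_sub, map_one, hcoe], hNm]
    have h25 : Algebra.norm ℤ (θ' - 1) = 25 := by exact_mod_cast h1
    rw [h25]
    rfl
  have hprod : (Ideal.absNorm P₁)^2 * Ideal.absNorm P₂ = 125 := by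
    rw [← map_pow, ← map_mul, ← hfact, habs5]
  have haP : Ideal.absNorm P₁ ∣ 35 := by
    rw [← habsup]
    exact Ideal.absNorm_dvd_absNorm_of_le ((Ideal.span_singleton_le_iff_mem _).mpr hupP₁)
  have hbP : Ideal.absNorm P₂ ∣ 25 := by
    rw [← habsdn]
    exact Ideal.absNorm_dvd_absNorm_of_le ((Ideal.span_singleton_le_iff_mem _).mpr hdnP₂)
  have ha125 : Ideal.absNorm P₁ ∣ 125 := ⟨Ideal.absNorm P₁ * Ideal.absNorm P₂, by rw [← hprod]; ring⟩
  have ha5 : Ideal.absNorm P₁ ∣ 5 := by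
    have h := Nat.dvd_gcd haP ha125
    norm_num at h
    exact h
  have ha : Ideal.absNorm P₁ = 5 := by
    rcases (Nat.dvd_prime (by norm_num)).mp ha5 with h | h
    · exfalso
      rw [h] at hprod
      simp at hprod
      rw [hprod] at hbP
      norm_num at hbP
    · exact h
  have hb : Ideal.absNorm P₂ = 5 := by
    rw [ha] at hprod
    omega
  -- primality and maximality
  have hprime₁ : P₁.IsPrime := Ideal.isPrime_of_irreducible_absNorm
    (by rw [ha]; exact (by norm_num : Nat.Prime 5))
  have hprime₂ : P₂.IsPrime := Ideal.isPrime_of_irreducible_absNorm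
    (by rw [hb]; exact (by norm_num : Nat.Prime 5))
  have h5ne : (5 : 𝓞 K) ≠ 0 := by norm_num
  have hne_bot₁ : P₁ ≠ ⊥ := by
    intro h
    rw [h] at h5P₁
    exact h5ne (Ideal.mem_bot.mp h5P₁)
  have hne_bot₂ : P₂ ≠ ⊥ := by
    intro h
    rw [h] at h5P₂
    exact h5ne (Ideal.mem_bot.mp h5P₂)
  have hneq : P₁ ≠ P₂ := by
    intro h
    have hd : θ' - 1 ∈ P₁ := h ▸ hdnP₂
    have h1 : (1 : 𝓞 K) ∈ P₁ := by
      rw [show (1 : 𝓞 K) = 5 - 2*((θ'+1) - (θ'-1)) by ring]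
      exact Ideal.sub_mem _ h5P₁ (Ideal.mul_mem_left _ _ (Ideal.sub_mem _ hupP₁ hd))
    exact hprime₁.ne_top ((Ideal.eq_top_iff_one _).mpr h1)
  exact ⟨P₁, P₂, hprime₁.isMaximal hne_bot₁, hprime₂.isMaximal hne_bot₂, hneq, hfact⟩


theorem stmt_18 :
    Irreducible g ∧
    (∃ z : ℂ, Polynomial.aeval z g = 0 ∧ z.im ≠ 0) ∧
    -- any field `K` with a root `θ` of `g` generating it over `ℚ` is
    -- (since `g` is irreducible) a copy of the root field `ℚ[X]/(g)`
    (∀ (K : Type) [Field K] [Algebra ℚ K] (θ : K),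
      Polynomial.aeval θ g = 0 → Algebra.adjoin ℚ {θ} = ⊤ →
      ∃ P₁ P₂ : Ideal (𝓞 K), P₁.IsMaximal ∧ P₂.IsMaximal ∧ P₁ ≠ P₂ ∧
        Ideal.span {(5 : 𝓞 K)} = P₁ ^ 2 * P₂) := by
  refine ⟨g_irred, g_nonreal_root, ?_⟩
  intro K _f inst θ hroot hgen
  haveI : CharZero K := charZero_of_injective_algebraMap (algebraMap ℚ K).injective
  have hsub : inst = DivisionRing.toRatAlgebra := Subsingleton.elim _ _
  rw [hsub] at hroot hgen
  exact part3' K θ hroot hgen
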